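/- Let Γ be a (G,3)-CH graph of girth 3, not complete and not complete multipartite, and let u be a vertex. If the induced subgraph [Γ(u)] is disconnected, then every connected component of [Γ(u)] is a complete graph, so [Γ(u)] ≅ rK_ℓ for some integers r, ℓ. -/

import Mathlib

open SimpleGraph

variable {V : Type*}

/-- `Γ` is `(G,3)`-connected-homogeneous: every isomorphism between connected induced
subgraphs of order at most 3 extends to an automorphism in `G`. -/
def IsCH3 (Γ : SimpleGraph V) (G : Subgroup (Γ ≃g Γ)) : Prop :=
  ∀ (A B : Set V), A.ncard ≤ 3 → (SimpleGraph.induce A Γ).Connected →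
    ∀ φ : (SimpleGraph.induce A Γ) ≃g (SimpleGraph.induce B Γ),
      ∃ g ∈ G, ∀ a : A, (g : Γ ≃g Γ) a.1 = ((φ a) : V)

/-- `G` is transitive on the vertices of `Γ`. -/
def VertexTrans (Γ : SimpleGraph V) (G : Subgroup (Γ ≃g Γ)) : Prop :=
  ∀ u v : V, ∃ g ∈ G, (g : Γ ≃g Γ) u = v

/-- The stabiliser of `u` in `G` is transitive on the neighbourhood of `u`. -/
def StabTrans (Γ : SimpleGraph V) (G : Subgroup (Γ ≃g Γ)) (u : V) : Prop :=
  ∀ v ∈ Γ.neighborSet u, ∀ w ∈ Γ.neighborSet u,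
    ∃ g ∈ G, (g : Γ ≃g Γ) u = u ∧ (g : Γ ≃g Γ) v = w

/-- The stabiliser of `u` in `G` is 2-transitive on the neighbourhood of `u`. -/
def Stab2Trans (Γ : SimpleGraph V) (G : Subgroup (Γ ≃g Γ)) (u : V) : Prop :=
  StabTrans Γ G u ∧
  ∀ v w v' w', v ∈ Γ.neighborSet u → w ∈ Γ.neighborSet u →
    v' ∈ Γ.neighborSet u → w' ∈ Γ.neighborSet u → v ≠ w → v' ≠ w' →
    ∃ g ∈ G, (g : Γ ≃g Γ) u = u ∧ (g : Γ ≃g Γ) v = v' ∧ (g : Γ ≃g Γ) w = w'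

/-- Two ordered pairs are equivalent under the stabiliser of `u` in `G`. -/
def PairEquiv (Γ : SimpleGraph V) (G : Subgroup (Γ ≃g Γ)) (u : V) (p q : V × V) : Prop :=
  ∃ g ∈ G, (g : Γ ≃g Γ) u = u ∧ (g : Γ ≃g Γ) p.1 = q.1 ∧ (g : Γ ≃g Γ) p.2 = q.2

/-- The stabiliser of `u` in `G` induces on the neighbourhood of `u` a transitive group
of rank 3: it is transitive, and it has exactly three orbits on ordered pairs of
neighbours of `u`. -/
def StabRank3 (Γ : SimpleGraph V) (G : Subgroup (Γ ≃g Γ)) (u : V) : Prop :=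
  StabTrans Γ G u ∧
  ∃ p₁ p₂ p₃ : V × V,
    (p₁.1 ∈ Γ.neighborSet u ∧ p₁.2 ∈ Γ.neighborSet u) ∧
    (p₂.1 ∈ Γ.neighborSet u ∧ p₂.2 ∈ Γ.neighborSet u) ∧
    (p₃.1 ∈ Γ.neighborSet u ∧ p₃.2 ∈ Γ.neighborSet u) ∧
    ¬ PairEquiv Γ G u p₁ p₂ ∧ ¬ PairEquiv Γ G u p₁ p₃ ∧ ¬ PairEquiv Γ G u p₂ p₃ ∧
    ∀ q : V × V, q.1 ∈ Γ.neighborSet u → q.2 ∈ Γ.neighborSet u →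
      PairEquiv Γ G u p₁ q ∨ PairEquiv Γ G u p₂ q ∨ PairEquiv Γ G u p₃ q

/-- A graph is complete multipartite iff non-adjacency is transitive. -/
def IsCompleteMultipartite (Γ : SimpleGraph V) : Prop :=
  Transitive fun x y => ¬ Γ.Adj x y

/-- The disjoint union `rKℓ` of `r` complete graphs on `ℓ` vertices. -/
def cliquesGraph (r ℓ : ℕ) : SimpleGraph (Fin r × Fin ℓ) where
  Adj x y := x.1 = y.1 ∧ x.2 ≠ y.2
  symm := ⟨fun x y h => ⟨h.1.symm, h.2.symm⟩⟩
  loopless := ⟨fun x h => h.2 rfl⟩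


/-- Walk induction: if "adjacent to adjacent implies adjacent", reachable distinct
vertices are adjacent. -/
lemma walk_adj_aux {W : Type*} {H : SimpleGraph W}
    (key : ∀ x z y : W, H.Adj x z → H.Adj z y → x ≠ y → H.Adj x y)
    {a b : W} (p : H.Walk a b) : a ≠ b → H.Adj a b := by
  induction p with
  | nil => intro h; exact absurd rfl h
  | @cons x y z h q ih =>
    intro hne
    rcases eq_or_ne y z with rfl | hyz
    · exact h
    · exact key x y z h (ih hyz) hne

/-- Induced-subgraph isomorphism from a vertex permutation preserving adjacency on `A`. -/
noncomputable def induceIsoOfEquiv {V : Type*} (Γ : SimpleGraph V) (σ : V ≃ V) (A : Set V)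
    (hadj : ∀ a ∈ A, ∀ b ∈ A, Γ.Adj (σ a) (σ b) ↔ Γ.Adj a b) :
    (SimpleGraph.induce A Γ) ≃g (SimpleGraph.induce (σ '' A) Γ) where
  toFun a := ⟨σ a.1, a.1, a.2, rfl⟩
  invFun b := ⟨σ.symm b.1, by
    obtain ⟨a, ha, hab⟩ := b.2
    rw [← hab, Equiv.symm_apply_apply]; exact ha⟩
  left_inv a := by ext; simp
  right_inv b := by ext; simp
  map_rel_iff' := by
    intro a b
    simp only [Equiv.coe_fn_mk, comap_adj, Function.Embedding.coe_subtype]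
    exact hadj a.1 a.2 b.1 b.2

/-- An automorphism fixing `u` induces an automorphism of the local graph at `u`. -/
noncomputable def stabIso {V : Type*} (Γ : SimpleGraph V) {u : V} (g : Γ ≃g Γ) (hg : g u = u) :
    (SimpleGraph.induce (Γ.neighborSet u) Γ) ≃g (SimpleGraph.induce (Γ.neighborSet u) Γ) where
  toFun v := ⟨g v.1, by
    have hv : Γ.Adj u v.1 := v.2
    have : Γ.Adj (g u) (g v.1) := g.map_adj_iff.mpr hv
    rwa [hg] at this⟩
  invFun v := ⟨g.symm v.1, by
    have hv : Γ.Adj u v.1 := v.2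
    have hgs : g.symm u = u := by
      conv_lhs => rw [← hg]
      exact g.toEquiv.symm_apply_apply u
    have : Γ.Adj (g.symm u) (g.symm v.1) := g.symm.map_adj_iff.mpr hv
    rwa [hgs] at this⟩
  left_inv v := by ext; simp
  right_inv v := by ext; simp
  map_rel_iff' := by
    intro a b
    simp only [Equiv.coe_fn_mk, comap_adj, Function.Embedding.coe_subtype]
    exact g.map_adj_iff

/-- A graph in which reachable distinct vertices are adjacent and all components
have the same size `ℓ` is isomorphic to a disjoint union of cliques. -/
lemma cliques_iso_aux {W : Type*} [Finite W] (H : SimpleGraph W)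
    (hadj : ∀ a b : W, H.Reachable a b → a ≠ b → H.Adj a b)
    {ℓ : ℕ} (hc : ∀ c : H.ConnectedComponent, Nat.card c.supp = ℓ) :
    Nonempty (H ≃g cliquesGraph (Nat.card H.ConnectedComponent) ℓ) := by
  classical
  set r := Nat.card H.ConnectedComponent with hr
  let eComp : H.ConnectedComponent ≃ Fin r := Finite.equivFin _
  let eSupp : ∀ c : H.ConnectedComponent, c.supp ≃ Fin ℓ :=
    fun c => Finite.equivFinOfCardEq (hc c)
  have key1 : ∀ (c c' : H.ConnectedComponent), c = c' → ∀ (x : c.supp) (y : c'.supp),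
      eSupp c x = eSupp c' y → (x : W) = y := by
    rintro c _ rfl x y h
    exact congrArg Subtype.val ((eSupp c).injective h)
  have key2 : ∀ (c c' : H.ConnectedComponent), c = c' → ∀ (x : c.supp) (y : c'.supp),
      (x : W) = (y : W) → eSupp c x = eSupp c' y := by
    rintro c _ rfl x y h
    exact congrArg (eSupp c) (Subtype.ext h)
  let f : W → Fin r × Fin ℓ := fun w =>
    (eComp (H.connectedComponentMk w), eSupp (H.connectedComponentMk w) ⟨w, rfl⟩)
  have hinj : Function.Injective f := by
    intro a b hab
    have h1 : H.connectedComponentMk a = H.connectedComponentMk b :=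
      eComp.injective (congrArg Prod.fst hab)
    exact key1 _ _ h1 ⟨a, rfl⟩ ⟨b, rfl⟩ (congrArg Prod.snd hab)
  have hsurj : Function.Surjective f := by
    rintro ⟨i, j⟩
    refine ⟨((eSupp (eComp.symm i)).symm j).1, ?_⟩
    have hxc : H.connectedComponentMk ((eSupp (eComp.symm i)).symm j).1 = eComp.symm i :=
      ((eSupp (eComp.symm i)).symm j).2
    have h2 : eSupp (H.connectedComponentMk ((eSupp (eComp.symm i)).symm j).1)
        ⟨((eSupp (eComp.symm i)).symm j).1, rfl⟩ = j := by
      have := key2 _ _ hxc ⟨((eSupp (eComp.symm i)).symm j).1, rfl⟩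
        ((eSupp (eComp.symm i)).symm j) rfl
      rw [this, Equiv.apply_symm_apply]
    refine Prod.ext ?_ h2
    show eComp _ = i
    rw [hxc, Equiv.apply_symm_apply]
  refine ⟨⟨Equiv.ofBijective f ⟨hinj, hsurj⟩, ?_⟩⟩
  intro a b
  show (cliquesGraph r ℓ).Adj (f a) (f b) ↔ H.Adj a b
  constructor
  · rintro ⟨h1, h2⟩
    have hcab : H.connectedComponentMk a = H.connectedComponentMk b := eComp.injective h1
    have hne : a ≠ b := by
      rintro rfl; exact h2 rfl
    exact hadj a b (ConnectedComponent.exact hcab) hne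
  · intro h
    have hcab : H.connectedComponentMk a = H.connectedComponentMk b :=
      ConnectedComponent.sound h.reachable
    refine ⟨congrArg eComp hcab, fun h2 => h.ne (key1 _ _ hcab ⟨a, rfl⟩ ⟨b, rfl⟩ h2)⟩

/-- If `Γ` is a `(G,3)`-CH graph of girth 3, neither complete nor complete
multipartite, and the induced subgraph on the neighbourhood `Γ(u)` of a vertex `u`
is disconnected, then every connected component of `[Γ(u)]` is a complete graph,
and `[Γ(u)] ≅ rKℓ` for some integers `r, ℓ`. -/
theorem local_disconnected_is_cliques {V : Type*} [Fintype V]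
    (Γ : SimpleGraph V) (G : Subgroup (Γ ≃g Γ))
    (hconn : Γ.Connected) (hvt : VertexTrans Γ G) (hCH : IsCH3 Γ G)
    (hgirth : Γ.girth = 3) (hnc : Γ ≠ ⊤) (hncm : ¬ _root_.IsCompleteMultipartite Γ)
    (u : V) (hdisc : ¬ (SimpleGraph.induce (Γ.neighborSet u) Γ).Connected) :
    (∀ a b : Γ.neighborSet u,
      (SimpleGraph.induce (Γ.neighborSet u) Γ).Reachable a b → a ≠ b →
        (SimpleGraph.induce (Γ.neighborSet u) Γ).Adj a b) ∧
    ∃ r ℓ : ℕ,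
      Nonempty ((SimpleGraph.induce (Γ.neighborSet u) Γ) ≃g cliquesGraph r ℓ) := by
  classical
  set S : Set V := Γ.neighborSet u with hSdef
  set H : SimpleGraph S := SimpleGraph.induce S Γ with hHdef
  have hmem : ∀ a : S, Γ.Adj u a.1 := fun a => a.2
  have hne_u : ∀ a : S, a.1 ≠ u := fun a h => Γ.loopless.irrefl u (h ▸ hmem a)
  -- key step: a common neighbour forces adjacency
  have key : ∀ x z y : S, H.Adj x z → H.Adj z y → x ≠ y → H.Adj x y := by
    intro x z y hxz hzy hxyne
    by_contra hxy
    have hreach : H.Reachable x y := hxz.reachable.trans hzy.reachable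
    obtain ⟨w, hw⟩ : ∃ w : S, ¬ H.Reachable x w := by
      by_contra hcon
      push_neg at hcon
      obtain ⟨s, t, hst⟩ : ∃ s t : S, ¬ H.Reachable s t := by
        by_contra h2
        push_neg at h2
        haveI : Nonempty S := ⟨x⟩
        exact hdisc ⟨fun a b => h2 a b⟩
      exact hst ((hcon s).symm.trans (hcon t))
    have hyw : y ≠ w := fun h => hw (h ▸ hreach)
    have hxw : ¬ H.Adj x w := fun h => hw h.reachable
    have hxwne : x ≠ w := fun h => hw (h ▸ Reachable.refl x)
    have hxyV : x.1 ≠ y.1 := fun h => hxyne (Subtype.ext h)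
    have hxwV : x.1 ≠ w.1 := fun h => hxwne (Subtype.ext h)
    have hxyΓ : ¬ Γ.Adj x.1 y.1 := hxy
    have hxwΓ : ¬ Γ.Adj x.1 w.1 := hxw
    set σ : V ≃ V := Equiv.swap y.1 w.1 with hσ
    set A : Set V := {x.1, u, y.1} with hA
    have hmemx : x.1 ∈ A := by simp [hA]
    have hmemu : u ∈ A := by simp [hA]
    have hmemy : y.1 ∈ A := by simp [hA]
    have hσx : σ x.1 = x.1 := Equiv.swap_apply_of_ne_of_ne hxyV hxwV
    have hσu : σ u = u :=
      Equiv.swap_apply_of_ne_of_ne (fun h => hne_u y h.symm) (fun h => hne_u w h.symm)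
    have hσy : σ y.1 = w.1 := Equiv.swap_apply_left _ _
    have hadjA : ∀ a ∈ A, ∀ b ∈ A, Γ.Adj (σ a) (σ b) ↔ Γ.Adj a b := by
      intro a ha b hb
      simp only [hA, Set.mem_insert_iff, Set.mem_singleton_iff] at ha hb
      rcases ha with rfl | rfl | rfl <;> rcases hb with rfl | rfl | rfl <;>
        simp only [hσx, hσu, hσy]
      · exact iff_of_false hxwΓ hxyΓ
      · exact iff_of_true (hmem w) (hmem y)
      · exact iff_of_false (fun h => hxwΓ h.symm) (fun h => hxyΓ h.symm)
      · exact iff_of_true (hmem w).symm (hmem y).symm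
      · exact iff_of_false (Γ.loopless.irrefl _) (Γ.loopless.irrefl _)
    have e1 : (SimpleGraph.induce A Γ).Adj ⟨x.1, hmemx⟩ ⟨u, hmemu⟩ := (hmem x).symm
    have e2 : (SimpleGraph.induce A Γ).Adj ⟨u, hmemu⟩ ⟨y.1, hmemy⟩ := hmem y
    have r1 := e1.reachable
    have r2 := e2.reachable
    have hconnA : (SimpleGraph.induce A Γ).Connected := by
      haveI : Nonempty A := ⟨⟨u, hmemu⟩⟩
      refine ⟨?_⟩
      rintro ⟨a, ha⟩ ⟨b, hb⟩
      have ha' := ha; have hb' := hb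
      simp only [hA, Set.mem_insert_iff, Set.mem_singleton_iff] at ha' hb'
      rcases ha' with rfl | rfl | rfl <;> rcases hb' with rfl | rfl | rfl
      · exact Reachable.refl _
      · exact r1
      · exact r1.trans r2
      · exact r1.symm
      · exact Reachable.refl _
      · exact r2
      · exact (r1.trans r2).symm
      · exact r2.symm
      · exact Reachable.refl _
    have hcard : A.ncard ≤ 3 := by
      refine le_trans (Set.ncard_insert_le _ _) ?_
      have h2 : ({u, y.1} : Set V).ncard ≤ 2 := by
        refine le_trans (Set.ncard_insert_le _ _) ?_
        rw [Set.ncard_singleton]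
      omega
    obtain ⟨g, hgG, hg⟩ := hCH A (σ '' A) hcard hconnA (induceIsoOfEquiv Γ σ A hadjA)
    have hgx : (g : Γ ≃g Γ) x.1 = x.1 := (hg ⟨x.1, hmemx⟩).trans hσx
    have hgu : (g : Γ ≃g Γ) u = u := (hg ⟨u, hmemu⟩).trans hσu
    have hgy : (g : Γ ≃g Γ) y.1 = w.1 := (hg ⟨y.1, hmemy⟩).trans hσy
    let ψ := stabIso Γ (g : Γ ≃g Γ) hgu
    have hre : H.Reachable (ψ x) (ψ y) := hreach.map ψ.toHom
    have hψx : ψ x = x := Subtype.ext hgx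
    have hψy : ψ y = w := Subtype.ext hgy
    rw [hψx, hψy] at hre
    exact hw hre
  have part1 : ∀ a b : S, H.Reachable a b → a ≠ b → H.Adj a b :=
    fun a b hr hne => hr.elim fun p => walk_adj_aux key p hne
  refine ⟨part1, ?_⟩
  -- the stabiliser is transitive on S
  have htrans : ∀ v w : S, ∃ ψ : H ≃g H, ψ v = w := by
    intro v w
    set σ : V ≃ V := Equiv.swap v.1 w.1 with hσ
    set A : Set V := {v.1, u} with hA
    have hmemv : v.1 ∈ A := by simp [hA]
    have hmemu : u ∈ A := by simp [hA]
    have hσv : σ v.1 = w.1 := Equiv.swap_apply_left _ _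
    have hσu : σ u = u :=
      Equiv.swap_apply_of_ne_of_ne (fun h => hne_u v h.symm) (fun h => hne_u w h.symm)
    have hadjA : ∀ a ∈ A, ∀ b ∈ A, Γ.Adj (σ a) (σ b) ↔ Γ.Adj a b := by
      intro a ha b hb
      simp only [hA, Set.mem_insert_iff, Set.mem_singleton_iff] at ha hb
      rcases ha with rfl | rfl <;> rcases hb with rfl | rfl <;> simp only [hσv, hσu]
      · exact iff_of_false (Γ.loopless.irrefl _) (Γ.loopless.irrefl _)
      · exact iff_of_true (hmem w).symm (hmem v).symm
      · exact iff_of_true (hmem w) (hmem v)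
    have hcard : A.ncard ≤ 3 := by
      refine le_trans (Set.ncard_insert_le _ _) ?_
      rw [Set.ncard_singleton]
      omega
    have e1 : (SimpleGraph.induce A Γ).Adj ⟨v.1, hmemv⟩ ⟨u, hmemu⟩ := (hmem v).symm
    have r1 := e1.reachable
    have hconnA : (SimpleGraph.induce A Γ).Connected := by
      haveI : Nonempty A := ⟨⟨u, hmemu⟩⟩
      refine ⟨?_⟩
      rintro ⟨a, ha⟩ ⟨b, hb⟩
      have ha' := ha; have hb' := hb
      simp only [hA, Set.mem_insert_iff, Set.mem_singleton_iff] at ha' hb'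
      rcases ha' with rfl | rfl <;> rcases hb' with rfl | rfl
      · exact Reachable.refl _
      · exact r1
      · exact r1.symm
      · exact Reachable.refl _
    obtain ⟨g, hgG, hg⟩ := hCH A (σ '' A) hcard hconnA (induceIsoOfEquiv Γ σ A hadjA)
    have hgu : (g : Γ ≃g Γ) u = u := (hg ⟨u, hmemu⟩).trans hσu
    have hgv : (g : Γ ≃g Γ) v.1 = w.1 := (hg ⟨v.1, hmemv⟩).trans hσv
    exact ⟨stabIso Γ (g : Γ ≃g Γ) hgu, Subtype.ext hgv⟩
  -- all components have the same size
  have hsupp : ∀ v w : S,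
      Nat.card ((H.connectedComponentMk v).supp) = Nat.card ((H.connectedComponentMk w).supp) := by
    intro v w
    obtain ⟨ψ, hψ⟩ := htrans v w
    refine Nat.card_congr (Equiv.subtypeEquiv ψ.toEquiv ?_)
    intro s
    simp only [ConnectedComponent.mem_supp_iff, ConnectedComponent.eq]
    rw [← hψ]
    exact (Iso.reachable_iff (φ := ψ)).symm
  by_cases hS2 : Nonempty S
  · obtain ⟨v0⟩ := hS2
    refine ⟨Nat.card H.ConnectedComponent, Nat.card ((H.connectedComponentMk v0).supp), ?_⟩
    refine cliques_iso_aux H part1 ?_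
    intro c
    obtain ⟨w, hwc⟩ := Quot.exists_rep c
    rw [← hwc]
    exact hsupp w v0
  · refine ⟨Nat.card H.ConnectedComponent, 0, ?_⟩
    refine cliques_iso_aux H part1 ?_
    intro c
    obtain ⟨w, _⟩ := Quot.exists_rep c
    exact (hS2 ⟨w⟩).elim
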